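/- arXiv:math/0507091 — 2 statements merged into one kernel-verified Lean document; each statement's English description precedes it below -/
import Mathlib

section
/- Let Φ be a cellular automaton and 𝔄 a Φ-invariant subshift with Φ : 𝔄 → 𝔄 bijective. If a ∈ 𝔄~ has an essential defect (i.e. a ∉ 𝔄 and there is no r > 0 and a' ∈ 𝔄 agreeing with a on {z : F_a(z) ≥ r}), then Φ(a) ∉ 𝔄; hence every essential defect is Φ-persistent, i.e. Φ^t(a) ∉ 𝔄 for all t ∈ ℕ. -/
open Topology MeasureTheory

/-- The configuration space `A^(ℤ^D)`, modelled as functions `(Fin D → ℤ) → A`. -/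
abbrev Config (A : Type*) (D : ℕ) := (Fin D → ℤ) → A

/-- Sup-norm of a lattice point `z ∈ ℤ^D`. -/
def normZ {D : ℕ} (z : Fin D → ℤ) : ℕ :=
  Finset.univ.sup fun i => (z i).natAbs

/-- The shift action: `(shift v a) z = a (z + v)`. -/
def shift {A : Type*} {D : ℕ} (v : Fin D → ℤ) (a : Config A D) : Config A D :=
  fun z => a (z + v)

/-- A subshift: a closed, shift-invariant subset of `A^(ℤ^D)`. -/
def IsSubshift {A : Type*} {D : ℕ} [TopologicalSpace A] (S : Set (Config A D)) : Prop :=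
  IsClosed S ∧ ∀ v : Fin D → ℤ, shift v '' S = S

/-- A cellular automaton of radius `r`: shift-commuting and locally determined
with radius `r`. -/
def IsCA {A : Type*} {D : ℕ} (Φ : Config A D → Config A D) (r : ℕ) : Prop :=
  (∀ (v : Fin D → ℤ) (a : Config A D), Φ (shift v a) = shift v (Φ a)) ∧
  ∀ (a b : Config A D) (z : Fin D → ℤ),
    (∀ w, normZ w ≤ r → a (z + w) = b (z + w)) → Φ a z = Φ b z

/-- The defect field `F_a(z)`: the largest radius `r` such that `a` restricted to
the ball `B(z,r)` agrees with (a translate of) some element of `S`. -/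
noncomputable def defectField {A : Type*} {D : ℕ} (S : Set (Config A D))
    (a : Config A D) (z : Fin D → ℤ) : ℕ∞ :=
  ⨆ (r : ℕ) (_ : ∃ b ∈ S, ∀ w, normZ w ≤ r → b (z + w) = a (z + w)), (r : ℕ∞)

/-- `𝔄~` : configurations with unbounded defect field. -/
def tildeSet {A : Type*} {D : ℕ} (S : Set (Config A D)) : Set (Config A D) :=
  {a | (⨆ z, defectField S a z) = ⊤}

/-- `Y_r(a) = { z : F_a(z) ≥ r }`, the non-defective region of range `r`. -/
def Yset {A : Type*} {D : ℕ} (S : Set (Config A D)) (a : Config A D) (r : ℕ) :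
    Set (Fin D → ℤ) :=
  {z | (r : ℕ∞) ≤ defectField S a z}

/-- `y` and `z` are connected by a trail inside `Y` (adjacency = sup-distance 1). -/
def TrailConn {D : ℕ} (Y : Set (Fin D → ℤ)) (y z : Fin D → ℤ) : Prop :=
  y ∈ Y ∧ Relation.ReflTransGen (fun p q => q ∈ Y ∧ normZ (q - p) = 1) y z

/-- A defect of `a` is removable if it can be erased by modifying `a` only near
the defective region. -/
def Removable {A : Type*} {D : ℕ} (S : Set (Config A D)) (a : Config A D) : Prop :=
  ∃ r : ℕ, 0 < r ∧ ∃ a' ∈ S, ∀ z ∈ Yset S a r, a' z = a z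

/-- The trail-connected component of `y` in `Y_r(a)` is projective: it meets
`Y_R(a)` for every `R`. -/
def Projective {A : Type*} {D : ℕ} (S : Set (Config A D)) (a : Config A D)
    (r : ℕ) (y : Fin D → ℤ) : Prop :=
  y ∈ Yset S a r ∧
    ∀ R : ℕ, ∃ w, TrailConn (Yset S a r) y w ∧ (R : ℕ∞) ≤ defectField S a w

/-- `λ^z = λ₁^{z₁} ⋯ λ_D^{z_D}`. -/
noncomputable def prodPow {D : ℕ} (l : Fin D → ℂ) (v : Fin D → ℤ) : ℂ :=
  ∏ i, l i ^ (v i)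

/-- A continuous `(Φ,σ)`-eigenfunction on `S` with generalized eigenvalue `(l0; l)`. -/
def IsEigenFun {A : Type*} {D : ℕ} [TopologicalSpace A] (S : Set (Config A D))
    (Φ : Config A D → Config A D) (l0 : ℂ) (l : Fin D → ℂ)
    (f : Config A D → ℂ) : Prop :=
  ContinuousOn f S ∧ (∃ a ∈ S, f a ≠ 0) ∧
  (∀ a ∈ S, f (Φ a) = l0 * f a) ∧
  ∀ a ∈ S, ∀ v : Fin D → ℤ, f (shift v a) = prodPow l v * f a

/-- The set `Spec(𝔄,Φ,σ)` of generalized eigenvalues (in the torus `𝕋^{D+1}`). -/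
def Spec' {A : Type*} {D : ℕ} [TopologicalSpace A] (S : Set (Config A D))
    (Φ : Config A D → Config A D) : Set (ℂ × (Fin D → ℂ)) :=
  {p | ‖p.1‖ = 1 ∧ (∀ i, ‖p.2 i‖ = 1) ∧
       ∃ f, IsEigenFun S Φ p.1 p.2 f}

/-- A continuous `σ`-eigenfunction on `S`. -/
def IsShiftEigenFun {A : Type*} {D : ℕ} [TopologicalSpace A] (S : Set (Config A D))
    (l : Fin D → ℂ) (f : Config A D → ℂ) : Prop :=
  ContinuousOn f S ∧ (∃ a ∈ S, f a ≠ 0) ∧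
  ∀ a ∈ S, ∀ v : Fin D → ℤ, f (shift v a) = prodPow l v * f a

/-- The group `Spec(𝔄,σ)` of shift eigenvalues. -/
def SpecSigma {A : Type*} {D : ℕ} [TopologicalSpace A] (S : Set (Config A D)) :
    Set (Fin D → ℂ) :=
  {l | (∀ i, ‖l i‖ = 1) ∧ ∃ f, IsShiftEigenFun S l f}

/-- Displacement `γ_{x,z}(λ) = λ^{x−z} f_z(a) / f_x(a)` of a dislocation. -/
noncomputable def disp {A : Type*} {D : ℕ} (l : Fin D → ℂ) (f : Config A D → ℂ)
    (a : Config A D) (x z : Fin D → ℤ) : ℂ :=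
  prodPow l (x - z) * f (shift z a) / f (shift x a)

/-- `C` is comeager relative to the subspace `S`. -/
def ComeagerIn {A : Type*} {D : ℕ} [TopologicalSpace A] (S C : Set (Config A D)) : Prop :=
  {x : S | (x : Config A D) ∈ C} ∈ residual S

/-- An a.e.-continuous (Baire-generically continuous), bounded, a.e.-nonzero
eigenfunction with eigenvalue `(l0; l)`, all equations holding comeagerly. -/
def IsAEEigenFun {A : Type*} {D : ℕ} [TopologicalSpace A] (S : Set (Config A D))
    (Φ : Config A D → Config A D) (l0 : ℂ) (l : Fin D → ℂ)
    (f : Config A D → ℂ) : Prop :=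
  (∃ M : ℝ, ∀ a ∈ S, ‖f a‖ ≤ M) ∧
  ComeagerIn S {a | ContinuousWithinAt f S a} ∧
  (¬ ComeagerIn S {a | f a = 0}) ∧
  ComeagerIn S {a | f (Φ a) = l0 * f a} ∧
  ∀ v : Fin D → ℤ, ComeagerIn S {a | f (shift v a) = prodPow l v * f a}

/-- The set `Spec_ae(𝔄,Φ,σ)` of a.e.-eigenvalues. -/
def SpecAE {A : Type*} {D : ℕ} [TopologicalSpace A] (S : Set (Config A D))
    (Φ : Config A D → Config A D) : Set (ℂ × (Fin D → ℂ)) :=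
  {p | ‖p.1‖ = 1 ∧ (∀ i, ‖p.2 i‖ = 1) ∧
       ∃ f, IsAEEigenFun S Φ p.1 p.2 f}

section Aux

variable {A : Type*} {D : ℕ}

lemma normZ_zero : normZ (0 : Fin D → ℤ) = 0 := by
  simp [normZ]

lemma normZ_add_le (u v : Fin D → ℤ) : normZ (u + v) ≤ normZ u + normZ v := by
  refine Finset.sup_le fun i _ => ?_
  have h1 : (u i).natAbs ≤ normZ u :=
    Finset.le_sup (f := fun j => (u j).natAbs) (Finset.mem_univ i)
  have h2 : (v i).natAbs ≤ normZ v :=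
    Finset.le_sup (f := fun j => (v j).natAbs) (Finset.mem_univ i)
  have := Int.natAbs_add_le (u i) (v i)
  simp only [Pi.add_apply]
  omega

lemma ball_finite (ρ : ℕ) : {u : Fin D → ℤ | normZ u ≤ ρ}.Finite := by
  have : {u : Fin D → ℤ | normZ u ≤ ρ} ⊆
      Set.univ.pi fun _ : Fin D => Set.Icc (-(ρ:ℤ)) (ρ:ℤ) := by
    intro u hu i _
    have h1 : (u i).natAbs ≤ normZ u :=
      Finset.le_sup (f := fun j => (u j).natAbs) (Finset.mem_univ i)
    have : (u i).natAbs ≤ ρ := le_trans h1 hu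
    constructor <;> [skip; skip] <;> omega
  exact (Set.Finite.pi fun _ => Set.finite_Icc _ _).subset this

lemma shift_mem {S : Set (Config A D)} [TopologicalSpace A] (hS : IsSubshift S)
    {b : Config A D} (hb : b ∈ S) (v : Fin D → ℤ) : shift v b ∈ S := by
  rw [← hS.2 v]; exact Set.mem_image_of_mem _ hb

/-- A CA is continuous in each coordinate. -/
lemma ca_coord_continuous [TopologicalSpace A] [DiscreteTopology A] [Nonempty A]
    {Φ : Config A D → Config A D} {ρ : ℕ} (hΦ : IsCA Φ ρ) (w : Fin D → ℤ) :
    Continuous fun a : Config A D => Φ a w := by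
  classical
  set Bs : Set (Fin D → ℤ) := {u | normZ u ≤ ρ} with hBs
  have hfin : Bs.Finite := ball_finite ρ
  haveI : Finite Bs := hfin.to_subtype
  let e : Config A D → (Bs → A) := fun a u => a (w + u)
  let φ : (Bs → A) → A := fun g =>
    Φ (fun v => if h : v - w ∈ Bs then g ⟨v - w, h⟩ else Classical.arbitrary A) w
  have heq : (fun a : Config A D => Φ a w) = φ ∘ e := by
    funext a
    refine hΦ.2 a _ w fun u hu => ?_
    have hmem : (w + u) - w ∈ Bs := by
      simpa [Bs, add_sub_cancel_left] using hu
    simp only [φ, e, Function.comp]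
    rw [dif_pos hmem]
    congr 1
    simp [add_sub_cancel_left]
  rw [heq]
  exact (continuous_of_discreteTopology).comp
    (continuous_pi fun u => continuous_apply _)

/-- Extraction of a local witness from the defect field. -/
lemma defect_witness [TopologicalSpace A] {S : Set (Config A D)} {a : Config A D}
    {z : Fin D → ℤ} {N : ℕ} (h : ((N + 1 : ℕ) : ℕ∞) ≤ defectField S a z) :
    ∃ b ∈ S, ∀ w, normZ w ≤ N → b (z + w) = a (z + w) := by
  by_contra hc
  push_neg at hc
  have hle : defectField S a z ≤ (N : ℕ∞) := by
    refine iSup_le fun r => iSup_le fun hr => ?_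
    obtain ⟨b, hbS, hb⟩ := hr
    have hrN : r ≤ N := by
      by_contra hgt
      push_neg at hgt
      obtain ⟨w, hw, hne⟩ := hc b hbS
      exact hne (hb w (le_trans hw (le_of_lt hgt)))
    exact_mod_cast hrN
  have := le_trans h hle
  simp only [Nat.cast_le] at this
  omega

/-- Inverse local rule with some radius, by compactness. -/
lemma inverse_radius [Fintype A] [TopologicalSpace A] [DiscreteTopology A] [Nonempty A]
    {Φ : Config A D → Config A D} {ρ : ℕ} (hΦ : IsCA Φ ρ)
    {S : Set (Config A D)} (hS : IsSubshift S) (hinj : Set.InjOn Φ S) :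
    ∃ ρ' : ℕ, ∀ b ∈ S, ∀ c ∈ S, ∀ z : Fin D → ℤ,
      (∀ w, normZ w ≤ ρ' → Φ b (z + w) = Φ c (z + w)) → b z = c z := by
  classical
  set K : ℕ → Set (Config A D × Config A D) := fun n =>
    {p | p.1 ∈ S ∧ p.2 ∈ S ∧ (∀ w, normZ w ≤ n → Φ p.1 w = Φ p.2 w) ∧ p.1 0 ≠ p.2 0}
    with hK
  have hcont := ca_coord_continuous hΦ
  have hclosed : ∀ n, IsClosed (K n) := by
    intro n
    have h1 : IsClosed {p : Config A D × Config A D | p.1 ∈ S} :=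
      hS.1.preimage continuous_fst
    have h2 : IsClosed {p : Config A D × Config A D | p.2 ∈ S} :=
      hS.1.preimage continuous_snd
    have h3 : IsClosed {p : Config A D × Config A D |
        ∀ w, normZ w ≤ n → Φ p.1 w = Φ p.2 w} := by
      have : {p : Config A D × Config A D | ∀ w, normZ w ≤ n → Φ p.1 w = Φ p.2 w}
          = ⋂ (w : Fin D → ℤ) (_ : normZ w ≤ n),
            {p : Config A D × Config A D | Φ p.1 w = Φ p.2 w} := by
        ext p; simp [Set.mem_iInter]
      rw [this]
      exact isClosed_iInter fun w => isClosed_iInter fun _ =>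
        isClosed_eq ((hcont w).comp continuous_fst) ((hcont w).comp continuous_snd)
    have h4 : IsClosed {p : Config A D × Config A D | p.1 0 ≠ p.2 0} := by
      have : {p : Config A D × Config A D | p.1 0 ≠ p.2 0} =
          ((fun p : Config A D × Config A D => (p.1 0, p.2 0)) ⁻¹'
            {q : A × A | q.1 = q.2})ᶜ := by
        ext p; simp [Set.mem_preimage]
      rw [this]
      exact (IsOpen.preimage (((continuous_apply _).comp continuous_fst).prodMk ((continuous_apply _).comp continuous_snd)) (isOpen_discrete _)).isClosed_compl
    have : K n = ({p : Config A D × Config A D | p.1 ∈ S} ∩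
        {p | p.2 ∈ S} ∩ {p | ∀ w, normZ w ≤ n → Φ p.1 w = Φ p.2 w} ∩
        {p | p.1 0 ≠ p.2 0}) := by
      ext p; simp [K, Set.mem_inter_iff, and_assoc]
    rw [this]
    exact ((h1.inter h2).inter h3).inter h4
  have hempty : ∃ n, K n = ∅ := by
    by_contra hne
    push_neg at hne
    have hnonempty : ∀ n, (K n).Nonempty := hne
    have hanti : ∀ n, K (n + 1) ⊆ K n := by
      intro n p hp
      exact ⟨hp.1, hp.2.1, fun w hw => hp.2.2.1 w (le_trans hw (Nat.le_succ n)),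
        hp.2.2.2⟩
    have hcpt : IsCompact (K 0) := (hclosed 0).isCompact
    obtain ⟨p, hp⟩ := IsCompact.nonempty_iInter_of_sequence_nonempty_isCompact_isClosed
      K hanti hnonempty hcpt hclosed
    have hp0 := (hp : p ∈ ⋂ n, K n)
    simp only [Set.mem_iInter] at hp0
    have heq : Φ p.1 = Φ p.2 := by
      funext w
      exact (hp0 (normZ w)).2.2.1 w le_rfl
    have := hinj (hp0 0).1 (hp0 0).2.1 heq
    exact (hp0 0).2.2.2 (by rw [this])
  obtain ⟨n, hn⟩ := hempty
  refine ⟨n, fun b hb c hc z hz => ?_⟩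
  have hnot : (shift z b, shift z c) ∉ K n := by rw [hn]; exact Set.notMem_empty _
  simp only [K, Set.mem_setOf_eq, not_and, not_not] at hnot
  have h1 : shift z b ∈ S := shift_mem hS hb z
  have h2 : shift z c ∈ S := shift_mem hS hc z
  have h3 : ∀ w, normZ w ≤ n → Φ (shift z b) w = Φ (shift z c) w := by
    intro w hw
    rw [hΦ.1 z b, hΦ.1 z c]
    simpa [shift, add_comm] using hz w hw
  have := hnot h1 h2 h3
  simpa [shift] using this

/-- Key step: an essential defect is not erased by one application of a
bijective CA. -/
lemma key_step [Fintype A] [TopologicalSpace A] [DiscreteTopology A]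
    {Φ : Config A D → Config A D} {ρ : ℕ} (hΦ : IsCA Φ ρ)
    {S : Set (Config A D)} (hS : IsSubshift S)
    (himg : Φ '' S = S) (hinj : Set.InjOn Φ S)
    {a : Config A D} (hess : ¬ Removable S a) : Φ a ∉ S := by
  intro hmem
  haveI : Nonempty A := ⟨a 0⟩
  obtain ⟨ρ', hρ'⟩ := inverse_radius hΦ hS hinj
  obtain ⟨b, hbS, hΦb⟩ : ∃ b ∈ S, Φ b = Φ a := by
    have : Φ a ∈ Φ '' S := himg.symm ▸ hmem
    obtain ⟨b, hb, heq⟩ := this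
    exact ⟨b, hb, heq⟩
  refine hess ⟨ρ + ρ' + 1, Nat.succ_pos _, b, hbS, fun z hz => ?_⟩
  obtain ⟨c, hcS, hc⟩ := defect_witness (N := ρ + ρ') hz
  have hcz : c z = a z := by simpa [normZ_zero] using hc 0 (by simp [normZ_zero])
  have hbc : b z = c z := by
    refine hρ' b hbS c hcS z fun w hw => ?_
    rw [hΦb]
    refine hΦ.2 a c (z + w) fun w' hw' => ?_
    have h1 : normZ (w + w') ≤ ρ + ρ' := by
      have := normZ_add_le w w'
      omega
    have := (hc (w + w') h1).symm
    rwa [← add_assoc] at this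
  rw [hbc, hcz]

lemma isCA_iterate {Φ : Config A D → Config A D} {r : ℕ} (hΦ : IsCA Φ r) :
    ∀ t : ℕ, IsCA (Φ^[t]) (t * r) := by
  intro t
  induction t with
  | zero =>
    refine ⟨fun v a => rfl, fun a b z h => ?_⟩
    simpa using h 0 (by simp [normZ_zero])
  | succ t ih =>
    constructor
    · intro v a
      simp only [Function.iterate_succ_apply']
      rw [ih.1 v a, hΦ.1 v]
    · intro a b z h
      simp only [Function.iterate_succ_apply']
      refine hΦ.2 _ _ z fun w hw => ?_
      refine ih.2 a b (z + w) fun w' hw' => ?_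
      have h1 : normZ (w + w') ≤ (t + 1) * r := by
        have ha1 := normZ_add_le w w'
        have hm : (t + 1) * r = t * r + r := by ring
        omega
      have := h (w + w') h1
      rwa [← add_assoc] at this

lemma image_iterate {Φ : Config A D → Config A D} {S : Set (Config A D)}
    (himg : Φ '' S = S) : ∀ t : ℕ, Φ^[t] '' S = S := by
  intro t
  induction t with
  | zero => simp
  | succ t ih =>
    have : Φ^[t+1] = Φ ∘ Φ^[t] := by
      funext x; exact Function.iterate_succ_apply' Φ t x
    rw [this, Set.image_comp, ih, himg]

lemma injOn_iterate {Φ : Config A D → Config A D} {S : Set (Config A D)}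
    (himg : Φ '' S = S) (hinj : Set.InjOn Φ S) : ∀ t : ℕ, Set.InjOn (Φ^[t]) S := by
  intro t
  induction t with
  | zero => simpa using Set.injOn_id S
  | succ t ih =>
    intro x hx y hy heq
    simp only [Function.iterate_succ_apply'] at heq
    have hxm : Φ^[t] x ∈ S := (image_iterate himg t) ▸ Set.mem_image_of_mem _ hx
    have hym : Φ^[t] y ∈ S := (image_iterate himg t) ▸ Set.mem_image_of_mem _ hy
    exact ih hx hy (hinj hxm hym heq)

end Aux

/-- if `Φ : 𝔄 → 𝔄` is bijective, then any essential defect is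
`Φ`-persistent: `Φ(a) ∉ 𝔄`, and indeed `Φ^t(a) ∉ 𝔄` for all `t`. -/
theorem essential_defect_persistent {A : Type*} {D : ℕ} [Fintype A]
    [TopologicalSpace A] [DiscreteTopology A]
    (Φ : Config A D → Config A D) (r : ℕ) (hΦ : IsCA Φ r)
    (S : Set (Config A D)) (hS : IsSubshift S)
    (himg : Φ '' S = S) (hinj : Set.InjOn Φ S)
    (a : Config A D) (ha : a ∈ tildeSet S) (hna : a ∉ S)
    (hess : ¬ Removable S a) :
    Φ a ∉ S ∧ ∀ t : ℕ, Φ^[t] a ∉ S := by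
  haveI : Nonempty A := ⟨a 0⟩
  constructor
  · exact key_step hΦ hS himg hinj hess
  · intro t
    cases t with
    | zero => simpa using hna
    | succ t =>
      exact key_step (isCA_iterate hΦ (t+1)) hS (image_iterate himg (t+1))
        (injOn_iterate himg hinj (t+1)) hess
end

section
/- Let 𝔄 ⊆ A^ℤ be a one-dimensional subshift of finite type. Then the ℤ-shift on 𝔄 is topologically mixing if and only if no finite defect of 𝔄 is essential (i.e. every a ∈ 𝔄~ with lim_{|z|→∞} F_a(z) = ∞ has a removable defect). -/
open Topology MeasureTheory

namespace MixAux

/-- embedding ℤ → (Fin 1 → ℤ) -/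
def e (n : ℤ) : Fin 1 → ℤ := fun _ => n

@[simp] lemma e_apply (n : ℤ) (i : Fin 1) : e n i = n := rfl

lemma vec_eq (v : Fin 1 → ℤ) : v = e (v 0) := by
  funext i
  have : i = 0 := Subsingleton.elim _ _
  rw [this]; rfl

lemma add_e (w : Fin 1 → ℤ) (z : ℤ) : w + e z = e (z + w 0) := by
  funext i
  have : i = 0 := Subsingleton.elim _ _
  rw [this]; show w 0 + z = z + w 0; ring

lemma e_add_vec (z : ℤ) (w : Fin 1 → ℤ) : e z + w = e (z + w 0) := by
  funext i
  have : i = 0 := Subsingleton.elim _ _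
  rw [this]; rfl

@[simp] lemma e_add (x y : ℤ) : e x + e y = e (x + y) := rfl

lemma normZ_e (x : ℤ) : normZ (e x) = x.natAbs := by
  apply le_antisymm
  · exact Finset.sup_le fun i _ => by rw [Subsingleton.elim i 0]; exact le_rfl
  · exact Finset.le_sup (f := fun i => ((e x) i).natAbs) (Finset.mem_univ 0)

lemma normZ_one (v : Fin 1 → ℤ) : normZ v = (v 0).natAbs := by
  rw [vec_eq v, normZ_e]; rfl

lemma shift_e_apply {A : Type*} (a : Config A 1) (x y : ℤ) :
    shift (e x) a (e y) = a (e (y + x)) := rfl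

section SFT

variable {A : Type*} (r : ℕ) (P : Config A 1 → Prop)
variable (S : Set (Config A 1))

/-- transfer of local rule along agreement -/
lemma P_transfer (hPloc : ∀ a b : Config A 1, (∀ w, normZ w ≤ r → a w = b w) → (P a ↔ P b))
    (x y : Config A 1) (z : ℤ)
    (h : ∀ d : ℤ, d.natAbs ≤ r → x (e (z + d)) = y (e (z + d))) :
    P (shift (e z) y) → P (shift (e z) x) := by
  intro hy
  refine (hPloc (shift (e z) x) (shift (e z) y) ?_).2 hy
  intro w hw
  have hw0 : (w 0).natAbs ≤ r := by rwa [normZ_one] at hw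
  show x (w + e z) = y (w + e z)
  rw [add_e]
  exact h _ hw0

lemma mem_S_iff (hSFT : S = {a | ∀ z : Fin 1 → ℤ, P (shift z a)}) (x : Config A 1) : x ∈ S ↔ ∀ z : ℤ, P (shift (e z) x) := by
  rw [hSFT]
  constructor
  · intro h z; exact h (e z)
  · intro h v; rw [vec_eq v]; exact h (v 0)

lemma shift_shift {A : Type*} (a : Config A 1) (u v : Fin 1 → ℤ) :
    shift u (shift v a) = shift (u + v) a := by
  funext w; show a (w + u + v) = a (w + (u + v)); rw [add_assoc]

lemma shift_mem_S (hSFT : S = {a | ∀ z : Fin 1 → ℤ, P (shift z a)}) (x : Config A 1) (hx : x ∈ S) (v : Fin 1 → ℤ) : shift v x ∈ S := by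
  rw [hSFT] at hx ⊢
  intro z
  rw [shift_shift]
  exact hx (z + v)

end SFT

section DF

variable {A : Type*} (S : Set (Config A 1))

lemma defectField_ge (a : Config A 1) (z : Fin 1 → ℤ) (R : ℕ) (b : Config A 1)
    (hb : b ∈ S) (h : ∀ w, normZ w ≤ R → b (z + w) = a (z + w)) :
    (R : ℕ∞) ≤ defectField S a z := by
  refine le_iSup_of_le R ?_
  rw [iSup_pos ⟨b, hb, h⟩]

lemma defectField_ge' (a : Config A 1) (z : ℤ) (R : ℕ) (b : Config A 1)
    (hb : b ∈ S) (h : ∀ d : ℤ, d.natAbs ≤ R → b (e (z + d)) = a (e (z + d))) :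
    (R : ℕ∞) ≤ defectField S a (e z) := by
  refine defectField_ge S a (e z) R b hb ?_
  intro w hw
  rw [e_add_vec]
  exact h _ (by rwa [normZ_one] at hw)

lemma defectField_witness (a : Config A 1) (z : Fin 1 → ℤ) (R : ℕ) (hR : 1 ≤ R)
    (h : (R : ℕ∞) ≤ defectField S a z) :
    ∃ b ∈ S, ∀ w, normZ w ≤ R → b (z + w) = a (z + w) := by
  by_contra hc
  have hle : defectField S a z ≤ ((R - 1 : ℕ) : ℕ∞) := by
    refine iSup_le fun r' => iSup_le fun hw => ?_
    rcases hw with ⟨b, hb, hbw⟩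
    have : r' ≤ R - 1 := by
      by_contra hlt
      push_neg at hlt
      have hRr : R ≤ r' := by omega
      exact hc ⟨b, hb, fun w hw => hbw w (le_trans hw hRr)⟩
    exact_mod_cast this
  have : (R : ℕ∞) ≤ ((R - 1 : ℕ) : ℕ∞) := le_trans h hle
  have : R ≤ R - 1 := by exact_mod_cast this
  omega

lemma defectField_witness' (a : Config A 1) (z : ℤ) (R : ℕ) (hR : 1 ≤ R)
    (h : (R : ℕ∞) ≤ defectField S a (e z)) :
    ∃ b ∈ S, ∀ d : ℤ, d.natAbs ≤ R → b (e (z + d)) = a (e (z + d)) := by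
  rcases defectField_witness S a (e z) R hR h with ⟨b, hb, hw⟩
  refine ⟨b, hb, fun d hd => ?_⟩
  have : e (z + d) = e z + e d := rfl
  rw [this]
  exact hw (e d) (by rwa [normZ_e])

end DF


section Words

variable {A : Type*} (r : ℕ) (P : Config A 1 → Prop) (S : Set (Config A 1))

/-- splice of two configurations at `i` with overlap `[i, i+2r)` -/
def splice (a b : Config A 1) (i : ℤ) : Config A 1 :=
  fun v => if v 0 < i + 2*r then a v else b v

lemma splice_left (a b : Config A 1) (i z : ℤ) (hz : z < i + 2*r) :
    splice r a b i (e z) = a (e z) := if_pos hz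

lemma splice_right (a b : Config A 1) (i : ℤ)
    (hag : ∀ j : ℤ, i ≤ j → j < i + 2*r → a (e j) = b (e j))
    (z : ℤ) (hz : i ≤ z) :
    splice r a b i (e z) = b (e z) := by
  unfold splice
  by_cases h : z < i + 2*r
  · rw [if_pos (by simpa using h)]
    exact hag z hz h
  · rw [if_neg (by simpa using h)]

lemma splice_mem_S
    (hPloc : ∀ a b : Config A 1, (∀ w, normZ w ≤ r → a w = b w) → (P a ↔ P b))
    (hSFT : S = {a | ∀ z : Fin 1 → ℤ, P (shift z a)})
    (a b : Config A 1) (ha : a ∈ S) (hb : b ∈ S) (i : ℤ)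
    (hag : ∀ j : ℤ, i ≤ j → j < i + 2*r → a (e j) = b (e j)) :
    splice r a b i ∈ S := by
  rw [mem_S_iff P S hSFT]
  intro z
  by_cases hz : z < i + r
  · refine P_transfer r P hPloc _ a z ?_ (((mem_S_iff P S hSFT a).1 ha) z)
    intro d hd
    refine splice_left r a b i _ ?_
    have : d ≤ (r : ℤ) := le_trans (Int.le_natAbs) (by exact_mod_cast hd)
    omega
  · push_neg at hz
    refine P_transfer r P hPloc _ b z ?_ (((mem_S_iff P S hSFT b).1 hb) z)
    intro d hd
    refine splice_right r a b i hag _ ?_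
    have : -d ≤ (r : ℤ) := by
      have := Int.le_natAbs (a := -d)
      simp only [Int.natAbs_neg] at this
      exact le_trans this (by exact_mod_cast hd)
    omega

/-- the `2r`-word of `a` at position `i` -/
def word (a : Config A 1) (i : ℤ) : Fin (2*r) → A :=
  fun j => a (e (i + (j : ℕ)))

lemma word_shift (x : Config A 1) (t i : ℤ) :
    word r (shift (e t) x) i = word r x (i + t) := by
  funext j
  show x (e (i + (j:ℕ)) + e t) = x (e (i + t + (j:ℕ)))
  rw [e_add]
  congr 1
  ring

/-- `Pth m u v`: there is a configuration in `S` with word `u` at `0` and `v` at `m`. -/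
def Pth (m : ℕ) (u v : Fin (2*r) → A) : Prop :=
  ∃ x ∈ S, word r x 0 = u ∧ word r x m = v

lemma Pth_self (x : Config A 1) (hx : x ∈ S) (i i' : ℤ) (h : i ≤ i')
    (hSFT : S = {a | ∀ z : Fin 1 → ℤ, P (shift z a)}) :
    Pth r S ((i' - i).toNat) (word r x i) (word r x i') := by
  refine ⟨shift (e i) x, shift_mem_S P S hSFT x hx _, ?_, ?_⟩
  · rw [word_shift, zero_add]
  · rw [word_shift]
    congr 1
    rw [Int.toNat_of_nonneg (by omega)]
    ring

lemma Pth_zero (x : Config A 1) (hx : x ∈ S) (i : ℤ)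
    (hSFT : S = {a | ∀ z : Fin 1 → ℤ, P (shift z a)}) :
    Pth r S 0 (word r x i) (word r x i) := by
  have := Pth_self r P S x hx i i le_rfl hSFT
  simpa using this

lemma Pth_trans
    (hPloc : ∀ a b : Config A 1, (∀ w, normZ w ≤ r → a w = b w) → (P a ↔ P b))
    (hSFT : S = {a | ∀ z : Fin 1 → ℤ, P (shift z a)})
    {m m' : ℕ} {u v w : Fin (2*r) → A}
    (h1 : Pth r S m u v) (h2 : Pth r S m' v w) :
    Pth r S (m + m') u w := by
  rcases h1 with ⟨x, hx, hxu, hxv⟩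
  rcases h2 with ⟨y, hy, hyv, hyw⟩
  set y' := shift (e (-(m:ℤ))) y with hy'def
  have hy' : y' ∈ S := shift_mem_S P S hSFT y hy _
  have hagw : word r y' (m:ℤ) = v := by
    rw [hy'def, word_shift]
    simpa using hyv
  have hag : ∀ j : ℤ, (m:ℤ) ≤ j → j < (m:ℤ) + 2*r → x (e j) = y' (e j) := by
    intro j hj1 hj2
    have hj : ∃ k : Fin (2*r), j = (m:ℤ) + (k:ℕ) := by
      refine ⟨⟨(j - m).toNat, by omega⟩, ?_⟩
      simp only []
      rw [Int.toNat_of_nonneg (by omega)]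
      ring
    rcases hj with ⟨k, rfl⟩
    have h1 : x (e ((m:ℤ) + (k:ℕ))) = v k := congrFun hxv k
    have h2 : y' (e ((m:ℤ) + (k:ℕ))) = v k := congrFun hagw k
    rw [h1, h2]
  refine ⟨splice r x y' m, splice_mem_S r P S hPloc hSFT x y' hx hy' m hag, ?_, ?_⟩
  · funext j
    show splice r x y' m (e (0 + (j:ℕ))) = u j
    rw [splice_left r x y' m _ (by have := j.2; omega)]
    exact congrFun hxu j
  · funext j
    show splice r x y' m (e ((m+m':ℕ) + (j:ℕ))) = w j
    rw [splice_right r x y' m hag _ (by push_cast; omega)]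
    show y' (e (((m:ℕ)+(m':ℕ) : ℕ) + (j:ℕ))) = w j
    have hstep : y' (e (((m+m' : ℕ) : ℤ) + (j:ℕ))) = y (e ((m':ℤ) + (j:ℕ))) := by
      show y (e (((m+m' : ℕ) : ℤ) + (j:ℕ)) + e (-(m:ℤ))) = _
      rw [e_add]
      congr 2
      push_cast
      ring
    rw [hstep]
    exact congrFun hyw j
  
end Words

section Periodic

variable {A : Type*} (r : ℕ) (P : Config A 1 → Prop) (S : Set (Config A 1))

/-- periodization of `a` with period `ℓ` starting at `p₁` -/
def perCfg (a : Config A 1) (p₁ ℓ : ℤ) : Config A 1 :=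
  fun v => a (e (p₁ + (v 0 - p₁) % ℓ))

lemma perCfg_periodic (a : Config A 1) (p₁ ℓ : ℤ) (w t : ℤ) :
    perCfg a p₁ ℓ (e (w + ℓ * t)) = perCfg a p₁ ℓ (e w) := by
  unfold perCfg
  simp only [e_apply]
  rw [show w + ℓ * t - p₁ = (w - p₁) + ℓ * t by ring, Int.add_mul_emod_self_left]

variable (a : Config A 1) (p₁ p₂ : ℤ)

lemma perCfg_eq_on (hp : p₁ < p₂) (hword : word r a p₁ = word r a p₂) :
    ∀ w, p₁ ≤ w → w < p₁ + (p₂ - p₁) + 2*r → perCfg a p₁ (p₂ - p₁) (e w) = a (e w) := by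
  set ℓ := p₂ - p₁ with hℓ
  have hℓpos : 0 < ℓ := by omega
  suffices H : ∀ n : ℕ, ∀ w, (w - p₁).toNat = n → p₁ ≤ w → w < p₁ + ℓ + 2*r →
      perCfg a p₁ ℓ (e w) = a (e w) by
    intro w h1 h2; exact H _ w rfl h1 h2
  intro n
  induction n using Nat.strong_induction_on with
  | _ n IH =>
    intro w hn h1 h2
    by_cases hcase : w < p₁ + ℓ
    · unfold perCfg
      simp only [e_apply]
      congr 2
      rw [Int.emod_eq_of_lt (by omega) (by omega)]
      ring
    · push_neg at hcase
      have hper : perCfg a p₁ ℓ (e w) = perCfg a p₁ ℓ (e (w - ℓ)) := by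
        have h := perCfg_periodic a p₁ ℓ (w - ℓ) 1
        rw [show w - ℓ + ℓ * 1 = w by ring] at h
        exact h
      have hIH : perCfg a p₁ ℓ (e (w - ℓ)) = a (e (w - ℓ)) :=
        IH ((w - ℓ) - p₁).toNat (by omega) _ rfl (by omega) (by omega)
      have hj : ∃ j : Fin (2*r), w = p₂ + (j : ℕ) := by
        refine ⟨⟨(w - p₂).toNat, by omega⟩, ?_⟩
        simp only []
        rw [Int.toNat_of_nonneg (by omega)]
        ring
      rcases hj with ⟨j, hw⟩
      have haw : a (e (w - ℓ)) = a (e w) := by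
        have h1 := congrFun hword j
        unfold word at h1
        rw [show w - ℓ = p₁ + (j:ℕ) by omega, hw]
        exact h1
      rw [hper, hIH, haw]

lemma perCfg_mem_S
    (hPloc : ∀ a b : Config A 1, (∀ w, normZ w ≤ r → a w = b w) → (P a ↔ P b))
    (hSFT : S = {a | ∀ z : Fin 1 → ℤ, P (shift z a)})
    (hp : p₁ < p₂) (hword : word r a p₁ = word r a p₂)
    (ha : a ∈ S) :
    perCfg a p₁ (p₂ - p₁) ∈ S := by
  set ℓ := p₂ - p₁ with hℓ
  have hℓpos : 0 < ℓ := by omega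
  rw [mem_S_iff P S hSFT]
  intro z
  set x := z - (p₁ + r) with hx
  set z' := p₁ + r + x % ℓ with hz'
  have hz'range : p₁ + r ≤ z' ∧ z' < p₁ + r + ℓ := by
    constructor
    · have := Int.emod_nonneg x (b := ℓ) (by omega)
      omega
    · have := Int.emod_lt_of_pos x hℓpos
      omega
  have hzz' : z = z' + ℓ * (x / ℓ) := by
    have h := Int.emod_add_mul_ediv x ℓ
    omega
  have hshift_eq : shift (e z) (perCfg a p₁ ℓ) = shift (e z') (perCfg a p₁ ℓ) := by
    funext v
    show perCfg a p₁ ℓ (v + e z) = perCfg a p₁ ℓ (v + e z')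
    rw [add_e, add_e]
    rw [show z + v 0 = (z' + v 0) + ℓ * (x / ℓ) by rw [hzz']; ring, perCfg_periodic]
  rw [hshift_eq]
  refine P_transfer r P hPloc _ a z' ?_ (((mem_S_iff P S hSFT a).1 ha) z')
  intro d hd
  have hdr : -(r:ℤ) ≤ d ∧ d ≤ r := by
    constructor
    · have := Int.le_natAbs (a := -d)
      simp only [Int.natAbs_neg] at this
      omega
    · exact le_trans (Int.le_natAbs) (by exact_mod_cast hd)
  exact perCfg_eq_on r a p₁ p₂ hp hword _ (by omega) (by omega)

lemma perCfg_word (hp : p₁ < p₂) (hword : word r a p₁ = word r a p₂) (t : ℤ) :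
    word r (perCfg a p₁ (p₂ - p₁)) (p₁ + (p₂ - p₁) * t) = word r a p₁ := by
  funext j
  show perCfg a p₁ (p₂ - p₁) (e (p₁ + (p₂ - p₁) * t + (j:ℕ))) = a (e (p₁ + (j:ℕ)))
  rw [show p₁ + (p₂ - p₁) * t + (j:ℕ) = (p₁ + (j:ℕ)) + (p₂-p₁) * t by ring,
    perCfg_periodic]
  exact perCfg_eq_on r a p₁ p₂ hp hword _ (by omega) (by have := j.2; omega)

end Periodic

section Numeric

lemma rep_lemma (ℓ c : ℕ) (hℓ : 1 ≤ ℓ) (hc : 1 ≤ c) (hcop : Nat.Coprime c ℓ) :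
    ∀ m : ℕ, ℓ * c ≤ m → ∃ i j : ℕ, m = i * ℓ + j * c := by
  intro m hm
  haveI : NeZero ℓ := ⟨by omega⟩
  set u : (ZMod ℓ)ˣ := ZMod.unitOfCoprime c hcop with hu
  set j : ℕ := ((m : ZMod ℓ) * (↑u⁻¹ : ZMod ℓ)).val with hj
  have hjℓ : j < ℓ := ZMod.val_lt _
  have hjc : ((j * c : ℕ) : ZMod ℓ) = (m : ZMod ℓ) := by
    push_cast
    rw [hj]
    simp only [ZMod.natCast_val, ZMod.cast_id]
    have huc : (↑u : ZMod ℓ) = (c : ZMod ℓ) := ZMod.coe_unitOfCoprime c hcop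
    calc (m : ZMod ℓ) * (↑u⁻¹ : ZMod ℓ) * c = (m : ZMod ℓ) * (↑u⁻¹ * ↑u) := by
          rw [huc]; ring
      _ = m := by rw [← Units.val_mul, inv_mul_cancel]; simp
  have hmod : (j * c) ≡ m [MOD ℓ] := (ZMod.natCast_eq_natCast_iff _ _ _).1 hjc
  have hjcm : j * c ≤ m := by
    have h1 : j * c ≤ (ℓ - 1) * c := Nat.mul_le_mul_right c (by omega)
    have h2 : (ℓ - 1) * c + c = ℓ * c := by
      have h3 : ℓ - 1 + 1 = ℓ := by omega
      calc (ℓ-1)*c + c = ((ℓ-1)+1)*c := by ring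
        _ = ℓ*c := by rw [h3]
    omega
  have hdvd : (ℓ:ℤ) ∣ (m:ℤ) - (j*c : ℕ) := hmod.dvd
  rcases hdvd with ⟨t, ht⟩
  have ht0 : 0 ≤ t := by
    by_contra hneg
    push_neg at hneg
    have : (ℓ:ℤ) * t < 0 := mul_neg_of_pos_of_neg (by exact_mod_cast hℓ) hneg
    omega
  refine ⟨t.toNat, j, ?_⟩
  zify
  rw [Int.toNat_of_nonneg ht0]
  push_cast at ht
  linarith [ht]

end Numeric

section Pump

variable {A : Type*} (r : ℕ) (P : Config A 1 → Prop) (S : Set (Config A 1))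

lemma Pth_iterate
    (hPloc : ∀ a b : Config A 1, (∀ w, normZ w ≤ r → a w = b w) → (P a ↔ P b))
    (hSFT : S = {a | ∀ z : Fin 1 → ℤ, P (shift z a)})
    {c : ℕ} {u : Fin (2*r) → A}
    (h0 : Pth r S 0 u u) (hc : Pth r S c u u) :
    ∀ j : ℕ, Pth r S (j * c) u u := by
  intro j
  induction j with
  | zero => simpa using h0
  | succ n IH =>
    have := Pth_trans r P S hPloc hSFT IH hc
    rwa [show n * c + c = (n+1) * c by ring] at this

lemma Pth_all_large
    (hPloc : ∀ a b : Config A 1, (∀ w, normZ w ≤ r → a w = b w) → (P a ↔ P b))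
    (hSFT : S = {a | ∀ z : Fin 1 → ℤ, P (shift z a)})
    {ℓ c : ℕ} {u : Fin (2*r) → A}
    (hℓ1 : 1 ≤ ℓ) (hc1 : 1 ≤ c) (hcop : Nat.Coprime c ℓ)
    (h0 : Pth r S 0 u u) (hℓp : Pth r S ℓ u u) (hcp : Pth r S c u u) :
    ∀ m : ℕ, ℓ * c ≤ m → Pth r S m u u := by
  intro m hm
  rcases rep_lemma ℓ c hℓ1 hc1 hcop m hm with ⟨i, j, hij⟩
  rw [hij]
  exact Pth_trans r P S hPloc hSFT
    (Pth_iterate r P S hPloc hSFT h0 hℓp i)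
    (Pth_iterate r P S hPloc hSFT h0 hcp j)

end Pump

section RG

variable {A : Type*} (r : ℕ) (P : Config A 1 → Prop) (S : Set (Config A 1))

lemma enat_sup_top {ι : Type*} (f : ι → ℕ∞) (h : ∀ R : ℕ, ∃ i, (R:ℕ∞) ≤ f i) :
    (⨆ i, f i) = ⊤ := by
  by_contra hne
  lift (⨆ i, f i) to ℕ using hne with m hm
  rcases h (m+1) with ⟨i, hi⟩
  have hfi : f i ≤ (m:ℕ∞) := by
    have h2 := le_iSup f i
    rwa [← hm] at h2
  have : ((m+1:ℕ):ℕ∞) ≤ (m:ℕ∞) := le_trans hi hfi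
  have : m + 1 ≤ m := by exact_mod_cast this
  omega

lemma ray_glue
    (hSFT : S = {a | ∀ z : Fin 1 → ℤ, P (shift z a)})
    (H : ∀ a ∈ tildeSet S,
          (∀ R : ℕ, ∃ M : ℕ, ∀ z : Fin 1 → ℤ,
            M ≤ normZ z → (R : ℕ∞) ≤ defectField S a z) →
          Removable S a)
    (a b : Config A 1) (ha : a ∈ S) (hb : b ∈ S) (n : ℤ) :
    ∃ x ∈ S, ∃ t s : ℤ, (∀ z : ℤ, z ≤ t → x (e z) = a (e z)) ∧
      (∀ z : ℤ, s ≤ z → x (e z) = b (e (z - n))) := by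
  set b' := shift (e (-n)) b with hb'def
  have hb' : b' ∈ S := shift_mem_S P S hSFT b hb _
  have hb'val : ∀ z : ℤ, b' (e z) = b (e (z - n)) := by
    intro z
    show b (e z + e (-n)) = _
    rw [e_add]
    congr 1
  set c : Config A 1 := fun v => if v 0 ≤ 0 then a v else b' v with hcdef
  have hcl : ∀ z : ℤ, z ≤ 0 → c (e z) = a (e z) := fun z hz => if_pos hz
  have hcr : ∀ z : ℤ, 1 ≤ z → c (e z) = b' (e z) := fun z hz => if_neg (by simp; omega)
  -- defect field bounds
  have hFleft : ∀ z : ℤ, ∀ R : ℕ, z + R ≤ 0 → (R:ℕ∞) ≤ defectField S c (e z) := by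
    intro z R hz
    refine defectField_ge' S c z R a ha ?_
    intro d hd
    have : d ≤ (R:ℤ) := le_trans (Int.le_natAbs) (by exact_mod_cast hd)
    rw [hcl _ (by omega)]
  have hFright : ∀ z : ℤ, ∀ R : ℕ, 1 ≤ z - R → (R:ℕ∞) ≤ defectField S c (e z) := by
    intro z R hz
    refine defectField_ge' S c z R b' hb' ?_
    intro d hd
    have : -d ≤ (R:ℤ) := by
      have := Int.le_natAbs (a := -d)
      simp only [Int.natAbs_neg] at this
      exact le_trans this (by exact_mod_cast hd)
    rw [hcr _ (by omega)]
  have hctilde : c ∈ tildeSet S := by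
    show (⨆ v, defectField S c v) = ⊤
    refine enat_sup_top _ ?_
    intro R
    exact ⟨e (-(R:ℤ)), hFleft _ R (by omega)⟩
  have hcfin : ∀ R : ℕ, ∃ M : ℕ, ∀ z : Fin 1 → ℤ,
      M ≤ normZ z → (R : ℕ∞) ≤ defectField S c z := by
    intro R
    refine ⟨R + n.natAbs + 1, ?_⟩
    intro v hv
    rw [normZ_one] at hv
    rw [vec_eq v]
    by_cases hz : v 0 ≤ 0
    · refine hFleft _ R ?_
      have h1 : ((R + n.natAbs + 1 : ℕ) : ℤ) ≤ (v 0).natAbs := by exact_mod_cast hv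
      have h2 := Int.natAbs_eq (v 0)
      omega
    · refine hFright _ R ?_
      push_neg at hz
      have h1 : ((R + n.natAbs + 1 : ℕ) : ℤ) ≤ (v 0).natAbs := by exact_mod_cast hv
      have h2 := Int.natAbs_eq (v 0)
      omega
  rcases H c hctilde hcfin with ⟨r₀, hr₀, x, hx, hxc⟩
  refine ⟨x, hx, -(r₀:ℤ), (r₀:ℤ) + n.natAbs + 1, ?_, ?_⟩
  · intro z hz
    have hmem : e z ∈ Yset S c r₀ := by
      show (r₀:ℕ∞) ≤ defectField S c (e z)
      exact hFleft z r₀ (by omega)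
    rw [hxc _ hmem, hcl _ (by omega)]
  · intro z hz
    have hmem : e z ∈ Yset S c r₀ := by
      show (r₀:ℕ∞) ≤ defectField S c (e z)
      exact hFright z r₀ (by omega)
    rw [hxc _ hmem, hcr _ (by omega), hb'val]

end RG

section Cyl

variable {A : Type*} [TopologicalSpace A]

lemma cylinder_sub (U : Set (Config A 1)) (hU : IsOpen U) (a : Config A 1) (ha : a ∈ U) :
    ∃ k : ℕ, ∀ x : Config A 1, (∀ z : ℤ, z.natAbs ≤ k → x (e z) = a (e z)) → x ∈ U := by
  rcases (isOpen_pi_iff.1 hU) a ha with ⟨I, u, hIu, hsub⟩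
  refine ⟨I.sup (fun v => normZ v), ?_⟩
  intro x hx
  apply hsub
  intro v hv
  have hk : normZ v ≤ I.sup (fun v => normZ v) := Finset.le_sup hv
  have h1 : x v = a v := by
    rw [vec_eq v]
    exact hx (v 0) (by rwa [normZ_one] at hk)
  rw [h1]
  exact (hIu v hv).2

end Cyl

section Repeat

variable {A : Type*} [Fintype A] (r : ℕ)

lemma exists_repeat_right (a : Config A 1) (c₀ : ℤ) :
    ∃ p₁ p₂ : ℤ, c₀ ≤ p₁ ∧ p₁ < p₂ ∧ word r a p₁ = word r a p₂ := by
  classical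
  obtain ⟨t₁, t₂, hne, heq⟩ := Fintype.exists_ne_map_eq_of_card_lt
    (fun t : Fin (Fintype.card (Fin (2*r) → A) + 1) => word r a (c₀ + (t:ℕ))) (by simp)
  rcases Ne.lt_or_gt hne with h | h
  · refine ⟨c₀ + (t₁:ℕ), c₀ + (t₂:ℕ), by omega, ?_, heq⟩
    have : (t₁:ℕ) < (t₂:ℕ) := h
    omega
  · refine ⟨c₀ + (t₂:ℕ), c₀ + (t₁:ℕ), by omega, ?_, heq.symm⟩
    have : (t₂:ℕ) < (t₁:ℕ) := h
    omega

lemma exists_repeat_left (a : Config A 1) (c₀ : ℤ) :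
    ∃ q₁ q₂ : ℤ, q₁ < q₂ ∧ q₂ ≤ c₀ ∧ word r a q₁ = word r a q₂ := by
  classical
  obtain ⟨t₁, t₂, hne, heq⟩ := Fintype.exists_ne_map_eq_of_card_lt
    (fun t : Fin (Fintype.card (Fin (2*r) → A) + 1) => word r a (c₀ - (t:ℕ))) (by simp)
  rcases Ne.lt_or_gt hne with h | h
  · refine ⟨c₀ - (t₂:ℕ), c₀ - (t₁:ℕ), ?_, by omega, heq.symm⟩
    have : (t₁:ℕ) < (t₂:ℕ) := h
    omega
  · refine ⟨c₀ - (t₁:ℕ), c₀ - (t₂:ℕ), ?_, by omega, heq⟩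
    have : (t₂:ℕ) < (t₁:ℕ) := h
    omega

end Repeat

section Reverse

variable {A : Type*} [Fintype A] (r : ℕ) (P : Config A 1 → Prop) (S : Set (Config A 1))

lemma words_connect
    (hPloc : ∀ a b : Config A 1, (∀ w, normZ w ≤ r → a w = b w) → (P a ↔ P b))
    (hSFT : S = {a | ∀ z : Fin 1 → ℤ, P (shift z a)})
    (H : ∀ a ∈ tildeSet S,
          (∀ R : ℕ, ∃ M : ℕ, ∀ z : Fin 1 → ℤ,
            M ≤ normZ z → (R : ℕ∞) ≤ defectField S a z) →
          Removable S a)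
    (a b : Config A 1) (ha : a ∈ S) (hb : b ∈ S) (k : ℕ) :
    ∃ N₁ : ℕ, ∀ m : ℕ, N₁ ≤ m →
      Pth r S m (word r a ((k:ℤ)+1)) (word r b (-(k:ℤ)-2*r)) := by
  classical
  obtain ⟨p₁, p₂, hp₁k, hp, hwa⟩ := exists_repeat_right r a ((k:ℤ)+1)
  obtain ⟨q₁, q₂, hq, hq₂k, hwb⟩ := exists_repeat_left r b (-(k:ℤ)-2*r)
  set ℓ : ℤ := p₂ - p₁ with hℓdef
  set ℓ' : ℤ := q₂ - q₁ with hℓ'def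
  have hℓpos : 0 < ℓ := by omega
  have hℓ'pos : 0 < ℓ' := by omega
  set ℓₙ : ℕ := ℓ.toNat with hℓₙdef
  have hℓₙ : (ℓₙ:ℤ) = ℓ := Int.toNat_of_nonneg (by omega)
  set ωp := word r a p₁ with hωp
  set ωm := word r b q₁ with hωm
  set cp := perCfg a p₁ ℓ with hcp
  set cq := perCfg b q₁ ℓ' with hcq
  have hcpS : cp ∈ S := perCfg_mem_S r P S a p₁ p₂ hPloc hSFT hp hwa ha
  have hcqS : cq ∈ S := perCfg_mem_S r P S b q₁ q₂ hPloc hSFT hq hwb hb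
  have hcpw : ∀ t : ℤ, word r cp (p₁ + ℓ * t) = ωp := fun t => perCfg_word r a p₁ p₂ hp hwa t
  have hcqw : ∀ t : ℤ, word r cq (q₁ + ℓ' * t) = ωm := fun t => perCfg_word r b q₁ q₂ hq hwb t
  -- cycle of length ≡ 1 (mod ℓ) at ωp
  obtain ⟨xc, hxcS, t₁s, s₁, hxcl, hxcr⟩ :=
    ray_glue P S hSFT H cp cp hcpS hcpS 1
  set Kb : ℤ := max 0 (p₁ + 2*r - t₁s) with hKb
  have hKbnn : 0 ≤ Kb := le_max_left _ _
  have hKbge : p₁ + 2*r - t₁s ≤ Kb := le_max_right _ _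
  have hKbmul : Kb ≤ ℓ * Kb := le_mul_of_one_le_left hKbnn (by omega)
  set g₁ : ℤ := p₁ - ℓ * Kb with hg₁
  have hg₁t : g₁ + 2*r ≤ t₁s := by omega
  have hxcw₁ : word r xc g₁ = ωp := by
    have h1 : word r xc g₁ = word r cp g₁ := by
      funext j
      show xc (e (g₁ + (j:ℕ))) = cp (e (g₁ + (j:ℕ)))
      exact hxcl _ (by have := j.2; omega)
    rw [h1, show g₁ = p₁ + ℓ * (-Kb) by rw [hg₁]; ring]
    exact hcpw _
  set M : ℤ := max 0 (s₁ - (g₁+1)) with hM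
  have hMnn : 0 ≤ M := le_max_left _ _
  have hMge : s₁ - (g₁+1) ≤ M := le_max_right _ _
  have hMmul : M ≤ ℓ * M := le_mul_of_one_le_left hMnn (by omega)
  set g₂ : ℤ := g₁ + 1 + ℓ * M with hg₂
  have hg₂s : s₁ ≤ g₂ := by omega
  have hg₂g : g₁ < g₂ := by omega
  have hxcw₂ : word r xc g₂ = ωp := by
    have h1 : word r xc g₂ = word r cp (g₂ - 1) := by
      funext j
      show xc (e (g₂ + (j:ℕ))) = cp (e (g₂ - 1 + (j:ℕ)))
      have h2 := hxcr (g₂ + (j:ℕ)) (by have := j.2; omega)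
      rw [h2]
      congr 2
      ring
    rw [h1, show g₂ - 1 = p₁ + ℓ * (M - Kb) by rw [hg₂, hg₁]; ring]
    exact hcpw _
  set Mₙ : ℕ := M.toNat with hMₙ
  have hMₙz : (Mₙ:ℤ) = M := Int.toNat_of_nonneg hMnn
  set c₁ : ℕ := 1 + ℓₙ * Mₙ with hc₁
  have hc₁z : (c₁:ℤ) = 1 + ℓ * M := by
    rw [hc₁]
    push_cast [hℓₙ, hMₙz]
    ring
  have hc₁pos : 1 ≤ c₁ := by omega
  have hPc₁ : Pth r S c₁ ωp ωp := by
    have h := Pth_self r P S xc hxcS g₁ g₂ (le_of_lt hg₂g) hSFT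
    rw [hxcw₁, hxcw₂] at h
    rwa [show (g₂ - g₁).toNat = c₁ by omega] at h
  have hPℓ : Pth r S ℓₙ ωp ωp := by
    have h := Pth_self r P S a ha p₁ p₂ (le_of_lt hp) hSFT
    rw [show (p₂ - p₁).toNat = ℓₙ by omega] at h
    rwa [← hωp, ← hwa] at h
  have hP0 : Pth r S 0 ωp ωp := Pth_zero r P S a ha p₁ hSFT
  have hcop : Nat.Coprime c₁ ℓₙ := by
    rw [hc₁]
    exact (Nat.coprime_add_mul_left_left 1 ℓₙ Mₙ).2 (Nat.coprime_one_left _)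
  -- bridge from ωp to ωm
  obtain ⟨xb, hxbS, tb, sb, hxbl, hxbr⟩ :=
    ray_glue P S hSFT H cp cq hcpS hcqS 0
  set Kc : ℤ := max 0 (p₁ + 2*r - tb) with hKc
  have hKcnn : 0 ≤ Kc := le_max_left _ _
  have hKcge : p₁ + 2*r - tb ≤ Kc := le_max_right _ _
  have hKcmul : Kc ≤ ℓ * Kc := le_mul_of_one_le_left hKcnn (by omega)
  set h₁ : ℤ := p₁ - ℓ * Kc with hh₁
  have hh₁t : h₁ + 2*r ≤ tb := by omega
  have hxbw₁ : word r xb h₁ = ωp := by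
    have h1 : word r xb h₁ = word r cp h₁ := by
      funext j
      show xb (e (h₁ + (j:ℕ))) = cp (e (h₁ + (j:ℕ)))
      exact hxbl _ (by have := j.2; omega)
    rw [h1, show h₁ = p₁ + ℓ * (-Kc) by rw [hh₁]; ring]
    exact hcpw _
  set Mb : ℤ := max 0 (max sb (h₁+1) - q₁) with hMb
  have hMbnn : 0 ≤ Mb := le_max_left _ _
  have hMbge : max sb (h₁+1) - q₁ ≤ Mb := le_max_right _ _
  have hMbmul : Mb ≤ ℓ' * Mb := le_mul_of_one_le_left hMbnn (by omega)
  set h₂ : ℤ := q₁ + ℓ' * Mb with hh₂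
  have hh₂s : sb ≤ h₂ ∧ h₁ < h₂ := by
    constructor <;> omega
  have hxbw₂ : word r xb h₂ = ωm := by
    have h1 : word r xb h₂ = word r cq h₂ := by
      funext j
      show xb (e (h₂ + (j:ℕ))) = cq (e (h₂ + (j:ℕ)))
      have h2 := hxbr (h₂ + (j:ℕ)) (by have := j.2; omega)
      rw [h2]
      congr 2
      ring
    rw [h1]
    exact hcqw _
  set m₀ : ℕ := (h₂ - h₁).toNat with hm₀
  have hPm₀ : Pth r S m₀ ωp ωm := by
    have h := Pth_self r P S xb hxbS h₁ h₂ (le_of_lt hh₂s.2) hSFT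
    rwa [hxbw₁, hxbw₂] at h
  -- initial and final segments
  set α : ℕ := (p₁ - ((k:ℤ)+1)).toNat with hα
  have hPα : Pth r S α (word r a ((k:ℤ)+1)) ωp := by
    have h := Pth_self r P S a ha ((k:ℤ)+1) p₁ hp₁k hSFT
    rwa [← hωp] at h
  set β : ℕ := ((-(k:ℤ)-2*r) - q₁).toNat with hβ
  have hPβ : Pth r S β ωm (word r b (-(k:ℤ)-2*r)) := by
    have h := Pth_self r P S b hb q₁ (-(k:ℤ)-2*r) (by omega) hSFT
    rwa [← hωm] at h
  refine ⟨α + ℓₙ * c₁ + m₀ + β, ?_⟩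
  intro m hm
  set m' : ℕ := m - (α + m₀ + β) with hm'
  have hm'ge : ℓₙ * c₁ ≤ m' := by omega
  have hPm' : Pth r S m' ωp ωp :=
    Pth_all_large r P S hPloc hSFT (by omega) hc₁pos hcop hP0 hPℓ hPc₁ m' hm'ge
  have hfinal := Pth_trans r P S hPloc hSFT hPα
    (Pth_trans r P S hPloc hSFT hPm'
      (Pth_trans r P S hPloc hSFT hPm₀ hPβ))
  rwa [show α + (m' + (m₀ + β)) = m by omega] at hfinal

end Reverse

section ReverseMain

variable {A : Type*} [Fintype A] [TopologicalSpace A] [DiscreteTopology A]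
variable (r : ℕ) (P : Config A 1 → Prop) (S : Set (Config A 1))

lemma reverse_dir
    (hPloc : ∀ a b : Config A 1, (∀ w, normZ w ≤ r → a w = b w) → (P a ↔ P b))
    (hSFT : S = {a | ∀ z : Fin 1 → ℤ, P (shift z a)})
    (H : ∀ a ∈ tildeSet S,
          (∀ R : ℕ, ∃ M : ℕ, ∀ z : Fin 1 → ℤ,
            M ≤ normZ z → (R : ℕ∞) ≤ defectField S a z) →
          Removable S a) :
    ∀ U V : Set (Config A 1), IsOpen U → IsOpen V →
      (U ∩ S).Nonempty → (V ∩ S).Nonempty →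
      ∃ N : ℕ, ∀ n ≥ N,
        ((shift (fun _ => (n : ℤ)) '' (U ∩ S)) ∩ (V ∩ S)).Nonempty := by
  intro U V hUo hVo hUS hVS
  obtain ⟨a, haU, haS⟩ := hUS
  obtain ⟨b, hbU, hbS⟩ := hVS
  obtain ⟨kU, hkU⟩ := cylinder_sub U hUo a haU
  obtain ⟨kV, hkV⟩ := cylinder_sub V hVo b hbU
  set k := max kU kV with hk
  obtain ⟨N₁, hN₁⟩ := words_connect r P S hPloc hSFT H a b haS hbS k
  refine ⟨N₁ + (2*k + 2*r + 1), ?_⟩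
  intro n hn
  set m : ℕ := n - (2*k + 2*r + 1) with hm
  have hmN₁ : N₁ ≤ m := by omega
  have hnm : (n:ℤ) = m + 2*k + 2*r + 1 := by push_cast; omega
  obtain ⟨cm, hcmS, hcm0, hcmm⟩ := hN₁ m hmN₁
  -- first splice
  set c' := shift (e (-((k:ℤ)+1))) cm with hc'def
  have hc'S : c' ∈ S := shift_mem_S P S hSFT cm hcmS _
  have hc'val : ∀ z : ℤ, c' (e z) = cm (e (z - ((k:ℤ)+1))) := by
    intro z
    show cm (e z + e (-((k:ℤ)+1))) = _
    rw [e_add]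
    congr 1
  have hag1 : ∀ j : ℤ, (k:ℤ)+1 ≤ j → j < (k:ℤ)+1 + 2*r → a (e j) = c' (e j) := by
    intro j hj1 hj2
    have hjj : ∃ jj : Fin (2*r), j = (k:ℤ)+1 + (jj:ℕ) := by
      refine ⟨⟨(j - ((k:ℤ)+1)).toNat, by omega⟩, ?_⟩
      simp only []
      rw [Int.toNat_of_nonneg (by omega)]
      ring
    obtain ⟨jj, rfl⟩ := hjj
    have h1 : a (e ((k:ℤ)+1 + (jj:ℕ))) = word r a ((k:ℤ)+1) jj := rfl
    have h2 : c' (e ((k:ℤ)+1 + (jj:ℕ))) = cm (e ((0:ℤ) + (jj:ℕ))) := by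
      rw [hc'val]
      congr 2
      ring
    rw [h1, h2, ← hcm0]
    rfl
  set x₁ := splice r a c' ((k:ℤ)+1) with hx₁def
  have hx₁S : x₁ ∈ S := splice_mem_S r P S hPloc hSFT a c' haS hc'S _ hag1
  -- second splice
  set b' := shift (e (-(n:ℤ))) b with hb'def
  have hb'S : b' ∈ S := shift_mem_S P S hSFT b hbS _
  have hb'val : ∀ z : ℤ, b' (e z) = b (e (z - n)) := by
    intro z
    show b (e z + e (-(n:ℤ))) = _
    rw [e_add]
    congr 1
  set i₂ : ℤ := (k:ℤ) + 1 + m with hi₂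
  have hag2 : ∀ j : ℤ, i₂ ≤ j → j < i₂ + 2*r → x₁ (e j) = b' (e j) := by
    intro j hj1 hj2
    have hjj : ∃ jj : Fin (2*r), j = i₂ + (jj:ℕ) := by
      refine ⟨⟨(j - i₂).toNat, by omega⟩, ?_⟩
      simp only []
      rw [Int.toNat_of_nonneg (by omega)]
      ring
    obtain ⟨jj, rfl⟩ := hjj
    have h1 : x₁ (e (i₂ + (jj:ℕ))) = c' (e (i₂ + (jj:ℕ))) :=
      splice_right r a c' ((k:ℤ)+1) hag1 _ (by have := jj.2; omega)
    have h2 : c' (e (i₂ + (jj:ℕ))) = cm (e ((m:ℤ) + (jj:ℕ))) := by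
      rw [hc'val]
      congr 2
      rw [hi₂]
      ring
    have h3 : cm (e ((m:ℤ) + (jj:ℕ))) = word r b (-(k:ℤ)-2*r) jj := by
      rw [← hcmm]
      rfl
    have h4 : b' (e (i₂ + (jj:ℕ))) = b (e (-(k:ℤ)-2*r + (jj:ℕ))) := by
      rw [hb'val]
      congr 2
      rw [hi₂, hnm]
      ring
    rw [h1, h2, h3, h4]
    rfl
  set x := splice r x₁ b' i₂ with hxdef
  have hxS : x ∈ S := splice_mem_S r P S hPloc hSFT x₁ b' hx₁S hb'S _ hag2
  -- x agrees with a on the cylinder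
  have hxa : ∀ z : ℤ, z.natAbs ≤ k → x (e z) = a (e z) := by
    intro z hz
    have hzk : -(k:ℤ) ≤ z ∧ z ≤ k := by
      have := Int.natAbs_eq z
      have h1 : (z.natAbs : ℤ) ≤ k := by exact_mod_cast hz
      omega
    have h1 : x (e z) = x₁ (e z) := splice_left r x₁ b' i₂ z (by omega)
    have h2 : x₁ (e z) = a (e z) := splice_left r a c' ((k:ℤ)+1) z (by omega)
    rw [h1, h2]
  have hxb : ∀ z : ℤ, z.natAbs ≤ k → x (e (z + n)) = b (e z) := by
    intro z hz
    have hzk : -(k:ℤ) ≤ z ∧ z ≤ k := by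
      have := Int.natAbs_eq z
      have h1 : (z.natAbs : ℤ) ≤ k := by exact_mod_cast hz
      omega
    have h1 : x (e (z + n)) = b' (e (z + n)) :=
      splice_right r x₁ b' i₂ hag2 _ (by omega)
    rw [h1, hb'val]
    congr 2
    ring
  -- conclude
  refine ⟨shift (e (n:ℤ)) x, ⟨x, ⟨?_, hxS⟩, rfl⟩, ?_, shift_mem_S P S hSFT x hxS _⟩
  · exact hkU x (fun z hz => by rw [hxa z (le_trans hz (by omega))])
  · refine hkV (shift (e (n:ℤ)) x) (fun z hz => ?_)
    have h1 : shift (e (n:ℤ)) x (e z) = x (e (z + n)) := by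
      show x (e z + e (n:ℤ)) = _
      rw [e_add]
    rw [h1, hxb z (le_trans hz (by omega))]

end ReverseMain

section Forward

variable {A : Type*} [Fintype A] [TopologicalSpace A] [DiscreteTopology A]
variable (r : ℕ) (P : Config A 1 → Prop) (S : Set (Config A 1))

/-- cylinder at the origin -/
def Cyl (u : Fin (2*r) → A) : Set (Config A 1) :=
  {x | ∀ j : Fin (2*r), x (e (j:ℕ)) = u j}

lemma Cyl_open (u : Fin (2*r) → A) : IsOpen (Cyl r u) := by
  have : Cyl r u = ⋂ j : Fin (2*r), (fun x : Config A 1 => x (e (j:ℕ))) ⁻¹' {u j} := by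
    ext x
    simp [Cyl, Set.mem_iInter]
  rw [this]
  exact isOpen_iInter_of_finite fun j =>
    (continuous_apply (e ((j:ℕ):ℤ))).isOpen_preimage _ (isOpen_discrete _)

lemma forward_dir
    (hPloc : ∀ a b : Config A 1, (∀ w, normZ w ≤ r → a w = b w) → (P a ↔ P b))
    (hSFT : S = {a | ∀ z : Fin 1 → ℤ, P (shift z a)})
    (mix : ∀ U V : Set (Config A 1), IsOpen U → IsOpen V →
      (U ∩ S).Nonempty → (V ∩ S).Nonempty →
      ∃ N : ℕ, ∀ n ≥ N,
        ((shift (fun _ => (n : ℤ)) '' (U ∩ S)) ∩ (V ∩ S)).Nonempty) :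
    ∀ a ∈ tildeSet S,
      (∀ R : ℕ, ∃ M : ℕ, ∀ z : Fin 1 → ℤ,
        M ≤ normZ z → (R : ℕ∞) ≤ defectField S a z) →
      Removable S a := by
  classical
  intro a _hatilde hfin
  -- the uniform gluing constant
  set glueN : (Fin (2*r) → A) → (Fin (2*r) → A) → ℕ := fun u v =>
    if h : (Cyl r u ∩ S).Nonempty ∧ (Cyl r v ∩ S).Nonempty then
      Classical.choose (mix (Cyl r u) (Cyl r v) (Cyl_open r u) (Cyl_open r v) h.1 h.2)
    else 0 with hglueNdef
  have hglueN : ∀ u v : Fin (2*r) → A, (Cyl r u ∩ S).Nonempty → (Cyl r v ∩ S).Nonempty →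
      ∀ n : ℕ, glueN u v ≤ n →
      ∃ x ∈ S, (∀ j : Fin (2*r), x (e (j:ℕ)) = u j) ∧
        (∀ j : Fin (2*r), x (e ((n:ℤ) + (j:ℕ))) = v j) := by
    intro u v hu hv n hn
    have hspec := Classical.choose_spec
      (mix (Cyl r u) (Cyl r v) (Cyl_open r u) (Cyl_open r v) hu hv)
    rw [hglueNdef] at hn
    simp only [dif_pos (And.intro hu hv)] at hn
    obtain ⟨y, ⟨x, ⟨hxu, hxS⟩, hyx⟩, hyv, _⟩ := hspec n hn
    refine ⟨x, hxS, hxu, ?_⟩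
    intro j
    have h1 : y (e (j:ℕ)) = v j := hyv j
    rw [← hyx] at h1
    have h2 : shift (fun _ => (n:ℤ)) x (e (j:ℕ)) = x (e ((j:ℕ) + (n:ℤ))) := by
      show x (e ((j:ℕ):ℤ) + e (n:ℤ)) = _
      rw [e_add]
    rw [h2] at h1
    rw [show (n:ℤ) + (j:ℕ) = (j:ℕ) + (n:ℤ) by ring]
    exact h1
  set Nstar : ℕ := Finset.univ.sup
    (fun p : (Fin (2*r) → A) × (Fin (2*r) → A) => glueN p.1 p.2) with hNstar
  have hNstarle : ∀ u v, glueN u v ≤ Nstar := fun u v =>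
    Finset.le_sup (f := fun p : (Fin (2*r) → A) × (Fin (2*r) → A) => glueN p.1 p.2)
      (Finset.mem_univ (u, v))
  set G₀ : ℕ := Nstar + 4*r + 2 with hG₀
  set r' : ℕ := G₀ + 3*r + 1 with hr'
  obtain ⟨M, hM⟩ := hfin r'
  set Yz : Set ℤ := {y : ℤ | (r' : ℕ∞) ≤ defectField S a (e y)} with hYz
  have hYout : ∀ z : ℤ, M ≤ z.natAbs → z ∈ Yz := by
    intro z hz
    exact hM (e z) (by rwa [normZ_e])
  -- witnesses near Y points
  have hYwit : ∀ y ∈ Yz, ∃ bm ∈ S, ∀ d : ℤ, d.natAbs ≤ r' →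
      bm (e (y + d)) = a (e (y + d)) := by
    intro y hy
    exact defectField_witness' S a y r' (by omega) hy
  have hPnear : ∀ z y : ℤ, y ∈ Yz → y - ((r':ℤ) - r) ≤ z → z ≤ y + ((r':ℤ) - r) →
      P (shift (e z) a) := by
    intro z y hy h1 h2
    obtain ⟨bm, hbmS, hbm⟩ := hYwit y hy
    refine P_transfer r P hPloc a bm z ?_ (((mem_S_iff P S hSFT bm).1 hbmS) z)
    intro d hd
    have hdr : -(r:ℤ) ≤ d ∧ d ≤ r := by
      constructor
      · have := Int.le_natAbs (a := -d)
        simp only [Int.natAbs_neg] at this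
        omega
      · exact le_trans (Int.le_natAbs) (by exact_mod_cast hd)
    have heq : z + d = y + (z + d - y) := by ring
    rw [heq]
    exact (hbm (z + d - y) (by have := Int.natAbs_eq (z + d - y); omega)).symm
  -- greatest Y-point ≤ z and least Y-point ≥ z
  have hzLex : ∀ z : ℤ, ∃ l, (l ∈ Yz ∧ l ≤ z) ∧ ∀ y, (y ∈ Yz ∧ y ≤ z) → y ≤ l := by
    intro z
    refine Int.exists_greatest_of_bdd ⟨z, fun y hy => hy.2⟩ ?_
    refine ⟨-((M : ℤ) + z.natAbs), hYout _ ?_, ?_⟩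
    · have h1 : (-((M:ℤ) + z.natAbs)).natAbs = M + z.natAbs := by
        rw [Int.natAbs_neg]
        exact_mod_cast Int.natAbs_natCast (M + z.natAbs)
      omega
    · have := Int.natAbs_eq z
      omega
  have hzRex : ∀ z : ℤ, ∃ u, (u ∈ Yz ∧ z ≤ u) ∧ ∀ y, (y ∈ Yz ∧ z ≤ y) → u ≤ y := by
    intro z
    refine Int.exists_least_of_bdd ⟨z, fun y hy => hy.2⟩ ?_
    refine ⟨(M : ℤ) + z.natAbs, hYout _ ?_, ?_⟩
    · have h1 : ((M:ℤ) + z.natAbs).natAbs = M + z.natAbs := by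
        exact_mod_cast Int.natAbs_natCast (M + z.natAbs)
      omega
    · have := Int.natAbs_eq z
      omega
  obtain ⟨zL, hzL⟩ := Classical.axiomOfChoice hzLex
  obtain ⟨zR, hzR⟩ := Classical.axiomOfChoice hzRex
  have hmemLR : ∀ z ∈ Yz, zL z = z ∧ zR z = z := by
    intro z hz
    constructor
    · exact le_antisymm (hzL z).1.2 ((hzL z).2 z ⟨hz, le_rfl⟩)
    · exact le_antisymm ((hzR z).2 z ⟨hz, le_rfl⟩) (hzR z).1.2
  have hnogap : ∀ z y : ℤ, y ∈ Yz → ¬(zL z < y ∧ y < zR z) := by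
    intro z y hy ⟨h1, h2⟩
    rcases le_or_gt y z with h | h
    · exact absurd ((hzL z).2 y ⟨hy, h⟩) (by omega)
    · exact absurd ((hzR z).2 y ⟨hy, le_of_lt h⟩) (by omega)
  -- bridge existence over long gaps
  have hbridge : ∀ p : ℤ × ℤ, ∃ x : Config A 1,
      (p.1 ∈ Yz → p.2 ∈ Yz → (G₀:ℤ) < p.2 - p.1 → x ∈ S ∧
        (∀ j : Fin (2*r), x (e (p.1+1+(j:ℕ))) = a (e (p.1+1+(j:ℕ)))) ∧
        (∀ j : Fin (2*r), x (e (p.2-2*r+(j:ℕ))) = a (e (p.2-2*r+(j:ℕ))))) := by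
    rintro ⟨l, u⟩
    by_cases hc : l ∈ Yz ∧ u ∈ Yz ∧ (G₀:ℤ) < u - l
    · obtain ⟨hl, hu, hlu⟩ := hc
      obtain ⟨bl, hblS, hbl⟩ := hYwit l hl
      obtain ⟨bu, hbuS, hbu⟩ := hYwit u hu
      set wA := word r a (l+1) with hwA
      set wB := word r a (u-2*r) with hwB
      have hCylA : (Cyl r wA ∩ S).Nonempty := by
        refine ⟨shift (e (l+1)) bl, ?_, shift_mem_S P S hSFT bl hblS _⟩
        intro j
        show bl (e ((j:ℕ):ℤ) + e (l+1)) = wA j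
        rw [e_add, show ((j:ℕ):ℤ) + (l+1) = l + (1 + (j:ℕ)) by ring,
          hbl (1 + (j:ℕ)) (by have := j.2; omega)]
        show a (e (l + (1 + (j:ℕ)))) = a (e (l + 1 + (j:ℕ)))
        congr 2
        ring
      have hCylB : (Cyl r wB ∩ S).Nonempty := by
        refine ⟨shift (e (u-2*r)) bu, ?_, shift_mem_S P S hSFT bu hbuS _⟩
        intro j
        show bu (e ((j:ℕ):ℤ) + e (u-2*r)) = wB j
        rw [e_add, show ((j:ℕ):ℤ) + (u-2*r) = u + ((j:ℕ) - 2*r) by ring,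
          hbu ((j:ℕ) - 2*r) (by have h2 := j.2; have := Int.natAbs_eq ((j:ℕ) - (2*r:ℕ):ℤ); push_cast; omega)]
        show a (e (u + ((j:ℕ) - 2*r))) = a (e (u - 2*r + (j:ℕ)))
        congr 2
        ring
      set n : ℕ := (u - 2*r - (l+1)).toNat with hn
      have hnz : (n:ℤ) = u - 2*r - (l+1) := Int.toNat_of_nonneg (by omega)
      have hnge : glueN wA wB ≤ n := by
        have h1 := hNstarle wA wB
        omega
      obtain ⟨x₀, hx₀S, hx₀A, hx₀B⟩ := hglueN wA wB hCylA hCylB n hnge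
      refine ⟨shift (e (-(l+1))) x₀, fun _ _ _ => ⟨shift_mem_S P S hSFT x₀ hx₀S _, ?_, ?_⟩⟩
      · intro j
        show x₀ (e (l+1+(j:ℕ)) + e (-(l+1))) = _
        rw [e_add, show l+1+((j:ℕ):ℤ) + -(l+1) = ((j:ℕ):ℤ) by ring, hx₀A j]
        rfl
      · intro j
        show x₀ (e (u-2*r+(j:ℕ)) + e (-(l+1))) = _
        rw [e_add, show u-2*(r:ℤ)+((j:ℕ):ℤ) + -(l+1) = (n:ℤ) + (j:ℕ) by rw [hnz]; ring,
          hx₀B j]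
        rfl
    · exact ⟨a, fun h1 h2 h3 => absurd ⟨h1, h2, h3⟩ hc⟩
  obtain ⟨bfun, hbfun⟩ := Classical.axiomOfChoice hbridge
  -- the repaired configuration
  set pred : ℤ → Prop := fun z =>
    (G₀:ℤ) < zR z - zL z ∧ zL z + 2*r < z ∧ z < zR z - 2*r with hpred
  set a' : Config A 1 := fun v =>
    if pred (v 0) then bfun (zL (v 0), zR (v 0)) (e (v 0)) else a (e (v 0)) with ha'
  have ha'val : ∀ z : ℤ, a' (e z) =
      if pred z then bfun (zL z, zR z) (e z) else a (e z) := fun z => rfl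
  have ha'Y : ∀ z ∈ Yz, a' (e z) = a (e z) := by
    intro z hz
    rw [ha'val, if_neg]
    intro hp
    rcases hmemLR z hz with ⟨h1, h2⟩
    rw [hpred] at hp
    omega
  -- membership of a' in S
  have ha'S : a' ∈ S := by
    rw [mem_S_iff P S hSFT]
    intro z
    by_cases hA : ∃ w : ℤ, z - r ≤ w ∧ w ≤ z + r ∧ pred w
    · obtain ⟨w₀, hw1, hw2, hw0⟩ := hA
      set l := zL w₀ with hl
      set u := zR w₀ with hu
      have hw0' : (G₀:ℤ) < u - l ∧ l + 2*r < w₀ ∧ w₀ < u - 2*r := hw0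
      have hlY : l ∈ Yz := (hzL w₀).1.1
      have huY : u ∈ Yz := (hzR w₀).1.1
      have hsame : ∀ w, l < w → w < u → zL w = l ∧ zR w = u := by
        intro w hw1' hw2'
        constructor
        · refine le_antisymm ?_ ((hzL w).2 l ⟨hlY, by omega⟩)
          by_contra hlt
          push_neg at hlt
          exact hnogap w₀ (zL w) (hzL w).1.1 ⟨hlt, by
            have := (hzL w).1.2
            omega⟩
        · refine le_antisymm ((hzR w).2 u ⟨huY, by omega⟩) ?_
          by_contra hlt
          push_neg at hlt
          exact hnogap w₀ (zR w) (hzR w).1.1 ⟨by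
            have := (hzR w).1.2
            omega, hlt⟩
      obtain ⟨hxS', hxA, hxB⟩ := hbfun (l, u) hlY huY hw0'.1
      have ha'x : ∀ w, l + 1 ≤ w → w ≤ u - 1 → a' (e w) = bfun (l, u) (e w) := by
        intro w hw1' hw2'
        rcases hsame w (by omega) (by omega) with ⟨hzlw, hzrw⟩
        rw [ha'val]
        by_cases hpw : pred w
        · rw [if_pos hpw, hzlw, hzrw]
        · rw [if_neg hpw]
          have hpw' : ¬((G₀:ℤ) < zR w - zL w ∧ zL w + 2*r < w ∧ w < zR w - 2*r) := hpw
          rw [hzlw, hzrw] at hpw'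
          have hcases : w ≤ l + 2*r ∨ u - 2*r ≤ w := by
            by_contra hcc
            push_neg at hcc
            exact hpw' ⟨hw0'.1, by omega, by omega⟩
          rcases hcases with hc | hc
          · have hj : ∃ j : Fin (2*r), w = l + 1 + (j:ℕ) := by
              refine ⟨⟨(w - l - 1).toNat, by omega⟩, ?_⟩
              simp only []
              rw [Int.toNat_of_nonneg (by omega)]
              ring
            obtain ⟨j, rfl⟩ := hj
            exact (hxA j).symm
          · have hj : ∃ j : Fin (2*r), w = u - 2*r + (j:ℕ) := by
              refine ⟨⟨(w - (u - 2*r)).toNat, by omega⟩, ?_⟩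
              simp only []
              rw [Int.toNat_of_nonneg (by omega)]
              ring
            obtain ⟨j, rfl⟩ := hj
            exact (hxB j).symm
      refine P_transfer r P hPloc a' (bfun (l, u)) z ?_
        (((mem_S_iff P S hSFT (bfun (l,u))).1 hxS') z)
      intro d hd
      have hdr : -(r:ℤ) ≤ d ∧ d ≤ r := by
        constructor
        · have := Int.le_natAbs (a := -d)
          simp only [Int.natAbs_neg] at this
          omega
        · exact le_trans (Int.le_natAbs) (by exact_mod_cast hd)
      exact ha'x (z + d) (by omega) (by omega)
    · push_neg at hA
      have hag : ∀ d : ℤ, d.natAbs ≤ r → a' (e (z + d)) = a (e (z + d)) := by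
        intro d hd
        have hdr : -(r:ℤ) ≤ d ∧ d ≤ r := by
          constructor
          · have := Int.le_natAbs (a := -d)
            simp only [Int.natAbs_neg] at this
            omega
          · exact le_trans (Int.le_natAbs) (by exact_mod_cast hd)
        rw [ha'val, if_neg (hA (z + d) (by omega) (by omega))]
      have hPz : P (shift (e z) a) := by
        by_cases hzY : z ∈ Yz
        · exact hPnear z z hzY (by omega) (by omega)
        · set l := zL z with hl
          set u := zR z with hu
          have hlY : l ∈ Yz := (hzL z).1.1
          have huY : u ∈ Yz := (hzR z).1.1
          have hlz : l < z := by
            rcases lt_or_eq_of_le (hzL z).1.2 with h | h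
            · exact h
            · exact absurd (h ▸ hlY) hzY
          have hzu : z < u := by
            rcases lt_or_eq_of_le (hzR z).1.2 with h | h
            · exact h
            · exact absurd (h ▸ huY) hzY
          by_cases hlong : (G₀:ℤ) < u - l
          · have hnp : ¬ pred z := hA z (by omega) (by omega)
            have hnp' : ¬((G₀:ℤ) < zR z - zL z ∧ zL z + 2*r < z ∧ z < zR z - 2*r) := hnp
            rw [← hl, ← hu] at hnp'
            have hcases : z ≤ l + 2*r ∨ u - 2*r ≤ z := by
              by_contra hcc
              push_neg at hcc
              exact hnp' ⟨hlong, by omega, by omega⟩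
            rcases hcases with hc | hc
            · exact hPnear z l hlY (by omega) (by omega)
            · exact hPnear z u huY (by omega) (by omega)
          · exact hPnear z l hlY (by omega) (by omega)
      exact P_transfer r P hPloc a' a z hag hPz
  -- conclusion
  refine ⟨r', by omega, a', ha'S, ?_⟩
  intro v hv
  have hv0 : v 0 ∈ Yz := by
    have : (r' : ℕ∞) ≤ defectField S a v := hv
    rwa [vec_eq v] at this
  have h1 : a' v = a' (e (v 0)) := by rw [← vec_eq]
  rw [h1, ha'Y (v 0) hv0, ← vec_eq]

end Forward

end MixAux

/-- a one-dimensional SFT is topologically mixing iff no finite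
defect is essential (every finite defect is removable). -/
theorem mixing_iff_no_finite_essential {A : Type*} [Fintype A]
    [TopologicalSpace A] [DiscreteTopology A]
    (r : ℕ) (P : Config A 1 → Prop)
    (hPloc : ∀ a b : Config A 1, (∀ w, normZ w ≤ r → a w = b w) → (P a ↔ P b))
    (S : Set (Config A 1)) (hSFT : S = {a | ∀ z : Fin 1 → ℤ, P (shift z a)}) :
    ((∀ U V : Set (Config A 1), IsOpen U → IsOpen V →
        (U ∩ S).Nonempty → (V ∩ S).Nonempty →
        ∃ N : ℕ, ∀ n ≥ N,
          ((shift (fun _ => (n : ℤ)) '' (U ∩ S)) ∩ (V ∩ S)).Nonempty)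
      ↔ (∀ a ∈ tildeSet S,
          (∀ R : ℕ, ∃ M : ℕ, ∀ z : Fin 1 → ℤ,
            M ≤ normZ z → (R : ℕ∞) ≤ defectField S a z) →
          Removable S a)) := by
  constructor
  · exact fun mix => MixAux.forward_dir r P S hPloc hSFT mix
  · exact fun H => MixAux.reverse_dir r P S hPloc hSFT H
end
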